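/- In any run of the continued fraction algorithm of length N ∈ ℕ ∪ {∞} on input z ∈ ℂ and any 1 ≤ n ≤ N: (i) |q_n·(q_n·z − p_n)| < μ/((1 − ε²)·|z_n|); and if moreover n + 1 ≤ N, then (ii) |q_n·(q_n·z − p_n)| < (1 + ε²)·μ²/((1 − ε²)·|a_{n+1}|) and (iii) |q_n·(q_n·z − p_n)| < μ·|q_n|/((1 − ε²)·|q_{n+1}|). -/

import Mathlib

noncomputable section

namespace CFNE

/-- τ = (Δ + i·√|Δ|)/2. -/
def tau (Δ : ℤ) : ℂ := ((Δ : ℂ) + Complex.I * (Real.sqrt |(Δ : ℝ)|)) / 2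

/-- The imaginary quadratic order 𝒪 = ℤ[τ] of discriminant Δ, as a subring of ℂ. -/
def O (Δ : ℤ) : Subring ℂ := Subring.closure {tau Δ}

/-- A (nonzero or zero) ideal of 𝒪, presented as a subset of ℂ. -/
structure IdealS (Δ : ℤ) where
  carrier : Set ℂ
  subset : carrier ⊆ (O Δ : Set ℂ)
  zero_mem : (0 : ℂ) ∈ carrier
  add_mem : ∀ x ∈ carrier, ∀ y ∈ carrier, x + y ∈ carrier
  neg_mem : ∀ x ∈ carrier, -x ∈ carrier
  smul_mem : ∀ r ∈ (O Δ : Set ℂ), ∀ x ∈ carrier, r * x ∈ carrier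

/-- The ideal as an additive subgroup of ℂ. -/
def IdealS.toAddSubgroup {Δ : ℤ} (I : IdealS Δ) : AddSubgroup ℂ where
  carrier := I.carrier
  zero_mem' := I.zero_mem
  add_mem' := fun hx hy => I.add_mem _ hx _ hy
  neg_mem' := fun hx => I.neg_mem _ hx

/-- The norm of an ideal: the index [𝒪 : 𝔟]. -/
def IdealS.norm {Δ : ℤ} (I : IdealS Δ) : ℕ :=
  I.toAddSubgroup.relIndex (O Δ).toAddSubgroup

/-- The ideal is nonzero. -/
def IdealS.Nonzero {Δ : ℤ} (I : IdealS Δ) : Prop := ∃ x ∈ I.carrier, x ≠ 0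

/-- Two nonzero ideals lie in the same class if x·𝔞 = y·𝔟 for some nonzero x, y ∈ 𝒪. -/
def SameClass {Δ : ℤ} (I J : IdealS Δ) : Prop :=
  ∃ x ∈ (O Δ : Set ℂ), ∃ y ∈ (O Δ : Set ℂ), x ≠ 0 ∧ y ≠ 0 ∧
    (fun t => x * t) '' I.carrier = (fun t => y * t) '' J.carrier

/-- A reduced ideal: a nonzero ideal of minimal norm in its ideal class. -/
def IsReduced {Δ : ℤ} (I : IdealS Δ) : Prop :=
  I.Nonzero ∧ ∀ J : IdealS Δ, J.Nonzero → SameClass I J → I.norm ≤ J.norm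

/-- The inverse fractional ideal 𝔟⁻¹ = {x ∈ ℂ : x·𝔟 ⊆ 𝒪}. -/
def invSet {Δ : ℤ} (I : IdealS Δ) : Set ℂ :=
  {x : ℂ | ∀ y ∈ I.carrier, x * y ∈ (O Δ : Set ℂ)}

/-- The fractional ideal a·𝔟 + b·𝔟⁻¹, as a subset of ℂ. -/
def combSet {Δ : ℤ} (I : IdealS Δ) (a b : ℂ) : Set ℂ :=
  {u : ℂ | ∃ s ∈ I.carrier, ∃ t ∈ invSet I, u = a * s + b * t}

/-- The ideal x·𝒪 + y·𝒪 of 𝒪 generated by x and y, as a subset of ℂ. -/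
def genSet (Δ : ℤ) (x y : ℂ) : Set ℂ :=
  {u : ℂ | ∃ s ∈ (O Δ : Set ℂ), ∃ t ∈ (O Δ : Set ℂ), u = x * s + y * t}

/-- The set is the carrier of a reduced ideal of 𝒪. -/
def IsReducedSet (Δ : ℤ) (S : Set ℂ) : Prop :=
  ∃ J : IdealS Δ, IsReduced J ∧ J.carrier = S

/-- B is admissible with ε ∈ (0,1): B is a nonempty finite subset of 𝒪 ∖ {0}, and for every
reduced ideal 𝔟 with 𝔟 ∩ B ≠ ∅, the discs D(a/b, ε/|b|) over b ∈ 𝔟 ∩ B, a ∈ 𝔟⁻¹ with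
a·𝔟 + b·𝔟⁻¹ reduced, cover ℂ. -/
def Admissible (Δ : ℤ) (B : Set ℂ) (ε : ℝ) : Prop :=
  B.Nonempty ∧ B.Finite ∧ B ⊆ (O Δ : Set ℂ) ∧ (0 : ℂ) ∉ B ∧
  ∀ I : IdealS Δ, IsReduced I → (I.carrier ∩ B).Nonempty →
    ∀ z : ℂ, ∃ b ∈ I.carrier ∩ B, ∃ a ∈ invSet I,
      IsReducedSet Δ (combSet I a b) ∧ ‖z - a / b‖ ≤ ε / ‖b‖

/-- μ = max{|b| : b ∈ B}. -/
def mu (B : Set ℂ) : ℝ := sSup ((fun w : ℂ => ‖w‖) '' B)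

/-- A run of the continued fraction algorithm of length N ∈ ℕ ∪ {∞} on input z. -/
structure Run (Δ : ℤ) (B : Set ℂ) (ε : ℝ) (z : ℂ) (N : ℕ∞) where
  a : ℤ → ℂ
  b : ℤ → ℂ
  p : ℤ → ℂ
  q : ℤ → ℂ
  zs : ℤ → ℂ
  b_zero : b 0 = 1
  p_neg_one : p (-1) = 0
  q_neg_one : q (-1) = 1
  p_zero : p 0 = 1
  q_zero : q 0 = 0
  zs_zero : zs 0 = z
  ha : ∀ n : ℕ, 1 ≤ n → (n : ℕ∞) ≤ N → a n ∈ O Δ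
  hb : ∀ n : ℕ, 1 ≤ n → (n : ℕ∞) ≤ N → b n ∈ B
  hne : ∀ n : ℕ, 1 ≤ n → (n : ℕ∞) ≤ N → b n * zs ((n : ℤ) - 1) - a n ≠ 0
  hclose : ∀ n : ℕ, 1 ≤ n → (n : ℕ∞) ≤ N →
    ‖b n * zs ((n : ℤ) - 1) - a n‖ ≤ ε * ‖b ((n : ℤ) - 1)‖
  hp : ∀ n : ℕ, 1 ≤ n → (n : ℕ∞) ≤ N →
    p n = (a n * p ((n : ℤ) - 1) + b n * p ((n : ℤ) - 2)) / b ((n : ℤ) - 1)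
  hq : ∀ n : ℕ, 1 ≤ n → (n : ℕ∞) ≤ N →
    q n = (a n * q ((n : ℤ) - 1) + b n * q ((n : ℤ) - 2)) / b ((n : ℤ) - 1)
  hz : ∀ n : ℕ, 1 ≤ n → (n : ℕ∞) ≤ N →
    zs n = b ((n : ℤ) - 1) / (b n * zs ((n : ℤ) - 1) - a n)
  hpO : ∀ n : ℕ, 1 ≤ n → (n : ℕ∞) ≤ N → p n ∈ O Δ
  hqO : ∀ n : ℕ, 1 ≤ n → (n : ℕ∞) ≤ N → q n ∈ O Δ
  hred : ∀ n : ℕ, 1 ≤ n → (n : ℕ∞) ≤ N → IsReducedSet Δ (genSet Δ (p n) (q n))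

section NumberTheory

variable {Δ : ℤ}

/-- The constant c = (Δ² − Δ)/4. -/
def cQ (Δ : ℤ) : ℤ := (Δ ^ 2 - Δ) / 4

lemma four_dvd (hΔmod : Δ % 4 = 0 ∨ Δ % 4 = 1) : (4 : ℤ) ∣ Δ ^ 2 - Δ := by
  rcases hΔmod with h | h
  · obtain ⟨t, ht⟩ := Int.dvd_of_emod_eq_zero h
    exact ⟨t * Δ - t, by rw [ht]; ring⟩
  · have h4 : (4 : ℤ) ∣ Δ - 1 := Int.dvd_self_sub_of_emod_eq h
    obtain ⟨t, ht⟩ := h4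
    exact ⟨Δ * t, by have : Δ = 4 * t + 1 := by omega
                     rw [this]; ring⟩

lemma cQ_mul (hΔmod : Δ % 4 = 0 ∨ Δ % 4 = 1) : cQ Δ * 4 = Δ ^ 2 - Δ :=
  Int.ediv_mul_cancel (four_dvd hΔmod)

lemma sqrt_sq (hΔneg : Δ < 0) :
    ((Real.sqrt |(Δ : ℝ)| : ℝ) : ℂ) ^ 2 = -(Δ : ℂ) := by
  rw [← Complex.ofReal_pow, Real.sq_sqrt (abs_nonneg _)]
  have : |(Δ : ℝ)| = ((-Δ : ℤ) : ℝ) := by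
    rw [abs_of_neg (by exact_mod_cast hΔneg)]; push_cast; ring
  rw [this]; push_cast; ring

lemma tau_conj : (starRingEnd ℂ) (tau Δ) = (Δ : ℂ) - tau Δ := by
  unfold tau
  rw [map_div₀, map_add, map_mul, Complex.conj_I, Complex.conj_ofReal]
  have h1 : (starRingEnd ℂ) ((Δ : ℤ) : ℂ) = ((Δ : ℤ) : ℂ) := by simp
  have h2 : (starRingEnd ℂ) (2 : ℂ) = 2 := map_ofNat _ 2
  rw [h1, h2]
  ring

lemma tau_mul_conj (hΔneg : Δ < 0) (hΔmod : Δ % 4 = 0 ∨ Δ % 4 = 1) :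
    tau Δ * ((Δ : ℂ) - tau Δ) = (cQ Δ : ℂ) := by
  have hc4 : ((cQ Δ : ℤ) : ℂ) * 4 = (Δ : ℂ) ^ 2 - (Δ : ℂ) := by
    exact_mod_cast congrArg (fun t : ℤ => (t : ℂ)) (cQ_mul hΔmod)
  have hd := sqrt_sq hΔneg
  unfold tau
  linear_combination (-1 / 4 : ℂ) * hc4 + (1 / 4 : ℂ) * hd -
    (((Real.sqrt |(Δ : ℝ)| : ℝ) : ℂ) ^ 2 / 4) * Complex.I_sq

lemma tau_sq (hΔneg : Δ < 0) (hΔmod : Δ % 4 = 0 ∨ Δ % 4 = 1) :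
    tau Δ ^ 2 = (Δ : ℂ) * tau Δ - (cQ Δ : ℂ) := by
  linear_combination -tau_mul_conj hΔneg hΔmod

lemma mem_O_iff (hΔneg : Δ < 0) (hΔmod : Δ % 4 = 0 ∨ Δ % 4 = 1) {x : ℂ} :
    x ∈ O Δ ↔ ∃ m k : ℤ, x = (m : ℂ) + (k : ℂ) * tau Δ := by
  constructor
  · intro hx
    let S : Subring ℂ :=
      { carrier := {u : ℂ | ∃ m k : ℤ, u = (m : ℂ) + (k : ℂ) * tau Δ}
        one_mem' := ⟨1, 0, by push_cast; ring⟩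
        zero_mem' := ⟨0, 0, by push_cast; ring⟩
        add_mem' := by
          rintro u v ⟨m, k, rfl⟩ ⟨m', k', rfl⟩
          exact ⟨m + m', k + k', by push_cast; ring⟩
        neg_mem' := by
          rintro u ⟨m, k, rfl⟩
          exact ⟨-m, -k, by push_cast; ring⟩
        mul_mem' := by
          rintro u v ⟨m, k, rfl⟩ ⟨m', k', rfl⟩
          refine ⟨m * m' - k * k' * cQ Δ, m * k' + k * m' + k * k' * Δ, ?_⟩
          have h2 := tau_sq hΔneg hΔmod
          push_cast
          linear_combination (k : ℂ) * (k' : ℂ) * h2 }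
    have hle : O Δ ≤ S := Subring.closure_le.mpr
      (Set.singleton_subset_iff.mpr ⟨0, 1, by push_cast; ring⟩)
    exact hle hx
  · rintro ⟨m, k, rfl⟩
    exact add_mem (intCast_mem (O Δ) m)
      (mul_mem (intCast_mem (O Δ) k) (Subring.subset_closure rfl))

lemma normSq_eq (hΔneg : Δ < 0) (hΔmod : Δ % 4 = 0 ∨ Δ % 4 = 1) (m k : ℤ) :
    Complex.normSq ((m : ℂ) + (k : ℂ) * tau Δ) =
      ((m ^ 2 + Δ * m * k + cQ Δ * k ^ 2 : ℤ) : ℝ) := by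
  have key : ((m : ℂ) + (k : ℂ) * tau Δ) * (starRingEnd ℂ) ((m : ℂ) + (k : ℂ) * tau Δ)
      = ((m ^ 2 + Δ * m * k + cQ Δ * k ^ 2 : ℤ) : ℂ) := by
    rw [map_add, map_mul, tau_conj]
    have h1 : (starRingEnd ℂ) ((m : ℤ) : ℂ) = ((m : ℤ) : ℂ) := by simp
    have h2 : (starRingEnd ℂ) ((k : ℤ) : ℂ) = ((k : ℤ) : ℂ) := by simp
    rw [h1, h2]
    have h3 := tau_mul_conj hΔneg hΔmod
    push_cast
    linear_combination (k : ℂ) * (k : ℂ) * h3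
  have h := Complex.mul_conj ((m : ℂ) + (k : ℂ) * tau Δ)
  rw [key] at h
  exact_mod_cast h.symm

lemma one_le_normSq (hΔneg : Δ < 0) (hΔmod : Δ % 4 = 0 ∨ Δ % 4 = 1) {x : ℂ}
    (hx : x ∈ O Δ) (h0 : x ≠ 0) : 1 ≤ Complex.normSq x := by
  obtain ⟨m, k, rfl⟩ := (mem_O_iff hΔneg hΔmod).mp hx
  rw [normSq_eq hΔneg hΔmod]
  have hpos : 0 < Complex.normSq ((m : ℂ) + (k : ℂ) * tau Δ) := Complex.normSq_pos.mpr h0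
  rw [normSq_eq hΔneg hΔmod] at hpos
  have : (0 : ℤ) < m ^ 2 + Δ * m * k + cQ Δ * k ^ 2 := by exact_mod_cast hpos
  exact_mod_cast this

lemma one_le_abs (hΔneg : Δ < 0) (hΔmod : Δ % 4 = 0 ∨ Δ % 4 = 1) {x : ℂ}
    (hx : x ∈ O Δ) (h0 : x ≠ 0) : 1 ≤ ‖x‖ := by
  have h := one_le_normSq hΔneg hΔmod hx h0
  rw [← Complex.sq_norm] at h
  nlinarith [norm_nonneg x]

lemma conj_mem (hΔneg : Δ < 0) (hΔmod : Δ % 4 = 0 ∨ Δ % 4 = 1) {x : ℂ}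
    (hx : x ∈ O Δ) : (starRingEnd ℂ) x ∈ O Δ := by
  obtain ⟨m, k, rfl⟩ := (mem_O_iff hΔneg hΔmod).mp hx
  rw [map_add, map_mul, tau_conj]
  refine (mem_O_iff hΔneg hΔmod).mpr ⟨m + k * Δ, -k, ?_⟩
  have h1 : (starRingEnd ℂ) ((m : ℤ) : ℂ) = ((m : ℤ) : ℂ) := by simp
  have h2 : (starRingEnd ℂ) ((k : ℤ) : ℂ) = ((k : ℤ) : ℂ) := by simp
  rw [h1, h2]; push_cast; ring

end NumberTheory
section Subgroups

variable {Δ : ℤ}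

/-- The additive group of 𝒪. -/
def OG (Δ : ℤ) : AddSubgroup ℂ := (O Δ).toAddSubgroup

lemma mem_OG {x : ℂ} : x ∈ OG Δ ↔ x ∈ O Δ := Iff.rfl

/-- Scaling of an additive subgroup of ℂ. -/
def msub (x : ℂ) (H : AddSubgroup ℂ) : AddSubgroup ℂ := H.map (AddMonoidHom.mulLeft x)

lemma mem_msub {x u : ℂ} {H : AddSubgroup ℂ} : u ∈ msub x H ↔ ∃ v ∈ H, x * v = u := by
  simp [msub, AddSubgroup.mem_map, AddMonoidHom.mulLeft]

lemma relindex_map_of_injective {G G' : Type*} [AddGroup G] [AddGroup G'] (f : G →+ G')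
    (hf : Function.Injective f) (H K : AddSubgroup G) :
    (H.map f).relIndex (K.map f) = H.relIndex K := by
  conv_rhs => rw [← AddSubgroup.comap_map_eq_self_of_injective hf H]
  rw [AddSubgroup.relIndex_comap]

lemma msub_msub (x y : ℂ) (H : AddSubgroup ℂ) : msub x (msub y H) = msub (x * y) H := by
  unfold msub
  rw [AddSubgroup.map_map]
  congr 1
  ext u
  simp [AddMonoidHom.mulLeft, mul_assoc]

lemma msub_le_OG {x : ℂ} (hx : x ∈ O Δ) {H : AddSubgroup ℂ} (hH : H ≤ OG Δ) :
    msub x H ≤ OG Δ := by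
  rintro u hu
  obtain ⟨v, hv, rfl⟩ := mem_msub.mp hu
  exact mem_OG.mpr (mul_mem hx (mem_OG.mp (hH hv)))

lemma msub_mono (x : ℂ) {H K : AddSubgroup ℂ} (h : H ≤ K) : msub x H ≤ msub x K :=
  AddSubgroup.map_mono h

lemma relindex_msub (x : ℂ) (hx : x ≠ 0) (H K : AddSubgroup ℂ) :
    (msub x H).relIndex (msub x K) = H.relIndex K :=
  relindex_map_of_injective _ (fun a b h => by
    simpa using mul_left_cancel₀ hx (by simpa [AddMonoidHom.mulLeft] using h)) H K

/-- The ℤ²-parametrization of 𝒪. -/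
def f2 (Δ : ℤ) : ℤ × ℤ →+ ℂ :=
  AddMonoidHom.mk' (fun p => (p.1 : ℂ) + (p.2 : ℂ) * tau Δ) (by
    intro a b
    simp only [Prod.fst_add, Prod.snd_add]
    push_cast
    ring)

lemma tau_im_pos (hΔneg : Δ < 0) : 0 < (tau Δ).im := by
  have h1 : tau Δ = Complex.ofReal ((Δ : ℝ) / 2) +
      Complex.ofReal (Real.sqrt |(Δ : ℝ)| / 2) * Complex.I := by
    unfold tau; push_cast; ring
  rw [h1]
  simp only [Complex.add_im, Complex.ofReal_im, Complex.mul_im, Complex.ofReal_re,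
    Complex.I_im, Complex.I_re, Complex.ofReal_im, mul_one, mul_zero]
  have : 0 < Real.sqrt |(Δ : ℝ)| := Real.sqrt_pos.mpr (by
    rw [abs_pos]; exact_mod_cast hΔneg.ne)
  linarith

lemma f2_inj (hΔneg : Δ < 0) : Function.Injective (f2 Δ) := by
  intro a b h
  simp only [f2, AddMonoidHom.mk'_apply] at h
  have him := congrArg Complex.im h
  have hre := congrArg Complex.re h
  simp only [Complex.add_im, Complex.add_re, Complex.intCast_im, Complex.intCast_re,
    Complex.mul_im, Complex.mul_re, Complex.intCast_im, Complex.intCast_re] at him hre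
  have htau := tau_im_pos hΔneg
  have h2 : (a.2 : ℝ) = (b.2 : ℝ) := by
    have : (a.2 : ℝ) * (tau Δ).im = (b.2 : ℝ) * (tau Δ).im := by linarith
    exact mul_right_cancel₀ (ne_of_gt htau) this
  have h2' : a.2 = b.2 := by exact_mod_cast h2
  have h1 : (a.1 : ℝ) = (b.1 : ℝ) := by rw [h2] at hre; linarith
  have h1' : a.1 = b.1 := by exact_mod_cast h1
  exact Prod.ext h1' h2'

lemma map_f2_top (hΔneg : Δ < 0) (hΔmod : Δ % 4 = 0 ∨ Δ % 4 = 1) :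
    AddSubgroup.map (f2 Δ) ⊤ = OG Δ := by
  ext u
  simp only [AddSubgroup.mem_map, AddSubgroup.mem_top, true_and, mem_OG]
  rw [mem_O_iff hΔneg hΔmod]
  constructor
  · rintro ⟨⟨m, k⟩, rfl⟩; exact ⟨m, k, rfl⟩
  · rintro ⟨m, k, rfl⟩; exact ⟨⟨m, k⟩, rfl⟩

lemma map_f2_P (hΔneg : Δ < 0) (hΔmod : Δ % 4 = 0 ∨ Δ % 4 = 1) (n : ℕ) :
    AddSubgroup.map (f2 Δ)
      ((AddSubgroup.zmultiples (n : ℤ)).prod (AddSubgroup.zmultiples (n : ℤ)))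
      = msub (n : ℂ) (OG Δ) := by
  ext u
  simp only [AddSubgroup.mem_map, AddSubgroup.mem_prod, AddSubgroup.mem_zmultiples_iff,
    mem_msub, mem_OG]
  constructor
  · rintro ⟨⟨m, k⟩, ⟨⟨m', hm⟩, ⟨k', hk⟩⟩, rfl⟩
    dsimp only at hm hk
    refine ⟨(m' : ℂ) + (k' : ℂ) * tau Δ, (mem_O_iff hΔneg hΔmod).mpr ⟨m', k', rfl⟩, ?_⟩
    simp only [f2, AddMonoidHom.mk'_apply]
    have hm' : ((m : ℤ) : ℂ) = (n : ℂ) * (m' : ℂ) := by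
      rw [← hm]; push_cast [smul_eq_mul]; ring
    have hk' : ((k : ℤ) : ℂ) = (n : ℂ) * (k' : ℂ) := by
      rw [← hk]; push_cast [smul_eq_mul]; ring
    rw [hm', hk']; ring
  · rintro ⟨v, hv, rfl⟩
    obtain ⟨m, k, rfl⟩ := (mem_O_iff hΔneg hΔmod).mp hv
    refine ⟨⟨n * m, n * k⟩, ⟨⟨m, by simp [smul_eq_mul, mul_comm]⟩, ⟨k, by simp [smul_eq_mul, mul_comm]⟩⟩, ?_⟩
    simp only [f2, AddMonoidHom.mk'_apply]
    push_cast
    ring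

end Subgroups
section Idx

variable {Δ : ℤ}

lemma relindex_nsmul (hΔneg : Δ < 0) (hΔmod : Δ % 4 = 0 ∨ Δ % 4 = 1) (n : ℕ) :
    (msub (n : ℂ) (OG Δ)).relIndex (OG Δ) = n * n := by
  rw [← map_f2_P hΔneg hΔmod, ← map_f2_top hΔneg hΔmod,
    relindex_map_of_injective _ (f2_inj hΔneg), AddSubgroup.relIndex_top_right,
    AddSubgroup.index_prod, Int.index_zmultiples, Int.natAbs_natCast]

/-- conjugation as an additive hom -/
def cj : ℂ →+ ℂ := (starRingEnd ℂ).toAddMonoidHom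

lemma cj_apply (x : ℂ) : cj x = (starRingEnd ℂ) x := rfl

lemma cj_inj : Function.Injective cj := fun a b h => by
  have := congrArg (starRingEnd ℂ) h
  rwa [cj_apply, cj_apply, Complex.conj_conj, Complex.conj_conj] at this

lemma map_cj_OG (hΔneg : Δ < 0) (hΔmod : Δ % 4 = 0 ∨ Δ % 4 = 1) :
    AddSubgroup.map cj (OG Δ) = OG Δ := by
  apply le_antisymm
  · rintro u hu
    obtain ⟨v, hv, rfl⟩ := hu
    exact mem_OG.mpr (conj_mem hΔneg hΔmod (mem_OG.mp hv))
  · intro u hu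
    exact ⟨(starRingEnd ℂ) u, mem_OG.mpr (conj_mem hΔneg hΔmod (mem_OG.mp hu)),
      by simp [cj_apply]⟩

lemma map_cj_msub (x : ℂ) (H : AddSubgroup ℂ) :
    AddSubgroup.map cj (msub x H) = msub ((starRingEnd ℂ) x) (AddSubgroup.map cj H) := by
  unfold msub
  rw [AddSubgroup.map_map, AddSubgroup.map_map]
  congr 1
  ext u
  simp [cj_apply, AddMonoidHom.mulLeft]

lemma idx_eq (hΔneg : Δ < 0) (hΔmod : Δ % 4 = 0 ∨ Δ % 4 = 1) {x : ℂ}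
    (hx : x ∈ O Δ) (h0 : x ≠ 0) :
    (((msub x (OG Δ)).relIndex (OG Δ) : ℕ) : ℝ) = Complex.normSq x := by
  obtain ⟨m, k, rfl⟩ := (mem_O_iff hΔneg hΔmod).mp hx
  set x : ℂ := (m : ℂ) + (k : ℂ) * tau Δ with hxdef
  have hxO : x ∈ O Δ := (mem_O_iff hΔneg hΔmod).mpr ⟨m, k, rfl⟩
  set nI : ℤ := m ^ 2 + Δ * m * k + cQ Δ * k ^ 2 with hnI
  have hns : Complex.normSq x = (nI : ℝ) := normSq_eq hΔneg hΔmod m k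
  have hpos : 0 < nI := by
    have := Complex.normSq_pos.mpr h0
    rw [hns] at this; exact_mod_cast this
  set Nn : ℕ := nI.toNat with hNn
  have hNncast : ((Nn : ℕ) : ℤ) = nI := Int.toNat_of_nonneg hpos.le
  set y : ℂ := (starRingEnd ℂ) x with hy
  have hyO : y ∈ O Δ := conj_mem hΔneg hΔmod hxO
  have hy0 : y ≠ 0 := by simpa [hy] using h0
  have hxy : x * y = ((Nn : ℕ) : ℂ) := by
    rw [hy, Complex.mul_conj, hns]
    exact_mod_cast congrArg (fun t : ℤ => (t : ℂ)) hNncast.symm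
  -- the chain Nn•OG ≤ x•OG ≤ OG
  have hchain1 : msub ((Nn : ℕ) : ℂ) (OG Δ) = msub x (msub y (OG Δ)) := by
    rw [msub_msub, hxy]
  have hyOG : msub y (OG Δ) ≤ OG Δ := msub_le_OG hyO le_rfl
  have hxOG : msub x (OG Δ) ≤ OG Δ := msub_le_OG hxO le_rfl
  have hle1 : msub ((Nn : ℕ) : ℂ) (OG Δ) ≤ msub x (OG Δ) := by
    rw [hchain1]; exact msub_mono x hyOG
  have hmul := AddSubgroup.relIndex_mul_relIndex _ _ _ hle1 hxOG
  rw [relindex_nsmul hΔneg hΔmod Nn] at hmul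
  have htrans : (msub ((Nn : ℕ) : ℂ) (OG Δ)).relIndex (msub x (OG Δ)) =
      (msub y (OG Δ)).relIndex (OG Δ) := by
    rw [hchain1]
    exact relindex_msub x h0 _ _
  -- conjugation symmetry: relindex (y OG) OG = relindex (x OG) OG
  have hconj : (msub y (OG Δ)).relIndex (OG Δ) = (msub x (OG Δ)).relIndex (OG Δ) := by
    conv_rhs => rw [← relindex_map_of_injective cj cj_inj]
    rw [map_cj_msub, map_cj_OG hΔneg hΔmod]
  rw [htrans, hconj] at hmul
  -- hmul : e * e = Nn * Nn
  set e : ℕ := (msub x (OG Δ)).relIndex (OG Δ) with he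
  have : e = Nn := by nlinarith [hmul]
  rw [this, hns]
  exact_mod_cast congrArg (fun t : ℤ => (t : ℝ)) hNncast

end Idx
section Ideals

variable {Δ : ℤ}

/-- the ideal x𝒪 + y𝒪 as an additive subgroup -/
def GSub (Δ : ℤ) (x y : ℂ) : AddSubgroup ℂ where
  carrier := genSet Δ x y
  zero_mem' := ⟨0, zero_mem _, 0, zero_mem _, by ring⟩
  add_mem' := by
    rintro u v ⟨s, hs, t, ht, rfl⟩ ⟨s', hs', t', ht', rfl⟩
    exact ⟨s + s', add_mem hs hs', t + t', add_mem ht ht', by ring⟩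
  neg_mem' := by
    rintro u ⟨s, hs, t, ht, rfl⟩
    exact ⟨-s, neg_mem hs, -t, neg_mem ht, by ring⟩

lemma GSub_carrier (x y : ℂ) : (GSub Δ x y : Set ℂ) = genSet Δ x y := rfl

lemma GSub_le_OG {x y : ℂ} (hx : x ∈ O Δ) (hy : y ∈ O Δ) : GSub Δ x y ≤ OG Δ := by
  rintro u ⟨s, hs, t, ht, rfl⟩
  exact mem_OG.mpr (add_mem (mul_mem hx hs) (mul_mem hy ht))

lemma msub_GSub (lam x y : ℂ) : msub lam (GSub Δ x y) = GSub Δ (lam * x) (lam * y) := by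
  ext u
  rw [mem_msub]
  constructor
  · rintro ⟨v, ⟨s, hs, t, ht, rfl⟩, rfl⟩
    exact ⟨s, hs, t, ht, by ring⟩
  · rintro ⟨s, hs, t, ht, rfl⟩
    exact ⟨x * s + y * t, ⟨s, hs, t, ht, rfl⟩, by ring⟩

lemma mem_genSet_right {x y : ℂ} (hy : y ∈ O Δ → True) : y = y := rfl

lemma self_mem_genSet_right (x y : ℂ) : y ∈ genSet Δ x y :=
  ⟨0, zero_mem _, 1, one_mem _, by ring⟩

lemma msub_OG_le_GSub (x y : ℂ) : msub y (OG Δ) ≤ GSub Δ x y := by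
  rintro u hu
  obtain ⟨v, hv, rfl⟩ := mem_msub.mp hu
  exact ⟨0, zero_mem _, v, mem_OG.mp hv, by ring⟩

lemma norm_eq_relindex {I : IdealS Δ} {H : AddSubgroup ℂ} (h : I.carrier = (H : Set ℂ)) :
    I.norm = H.relIndex (OG Δ) := by
  have : I.toAddSubgroup = H := SetLike.ext' h
  rw [IdealS.norm, this]; rfl

/-- Main ideal-theoretic lemma: if genSet(p,q) and genSet(λp, λq) are both (carriers of)
reduced ideals, with b_y * λ = b_x for nonzero b_x, b_y ∈ 𝒪, and q ≠ 0, then |b_x| = |b_y|. -/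
lemma abs_eq_of_reduced (hΔneg : Δ < 0) (hΔmod : Δ % 4 = 0 ∨ Δ % 4 = 1)
    {p q lam bx by' : ℂ}
    (hp : p ∈ O Δ) (hq : q ∈ O Δ) (hq0 : q ≠ 0)
    (hbx : bx ∈ O Δ) (hbx0 : bx ≠ 0) (hby : by' ∈ O Δ) (hby0 : by' ≠ 0)
    (hlam : by' * lam = bx) (hlp : lam * p ∈ O Δ) (hlq : lam * q ∈ O Δ)
    (h1 : IsReducedSet Δ (genSet Δ p q))
    (h2 : IsReducedSet Δ (genSet Δ (lam * p) (lam * q))) :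
    ‖bx‖ = ‖by'‖ := by
  obtain ⟨J1, hJ1red, hJ1⟩ := h1
  obtain ⟨J2, hJ2red, hJ2⟩ := h2
  have hlam0 : lam ≠ 0 := by
    intro h; rw [h, mul_zero] at hlam; exact hbx0 hlam.symm
  -- norms
  have hn1 : J1.norm = (GSub Δ p q).relIndex (OG Δ) := norm_eq_relindex (by rw [hJ1, GSub_carrier])
  have hn2 : J2.norm = (msub lam (GSub Δ p q)).relIndex (OG Δ) := by
    rw [msub_GSub]
    exact norm_eq_relindex (by rw [hJ2, GSub_carrier])
  -- nonzero-ness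
  have hJ1nz : J1.Nonzero := ⟨q, by rw [hJ1]; exact self_mem_genSet_right p q, hq0⟩
  have hJ2nz : J2.Nonzero := by
    refine ⟨lam * q, by rw [hJ2]; exact self_mem_genSet_right _ _, mul_ne_zero hlam0 hq0⟩
  -- same class both ways
  have himg : ∀ w : ℂ, (fun t => w * t) '' J2.carrier =
      (fun t => (w * lam) * t) '' J1.carrier := by
    intro w
    rw [hJ1, hJ2]
    have : genSet Δ (lam * p) (lam * q) = (fun t => lam * t) '' genSet Δ p q := by
      rw [← GSub_carrier (Δ := Δ), ← msub_GSub]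
      ext u
      simp only [msub, AddSubgroup.coe_map, Set.mem_image, AddMonoidHom.coe_mulLeft]
      rfl
    rw [this, ← Set.image_comp]
    congr 1
    funext t
    simp [mul_assoc]
  have hsc12 : SameClass J1 J2 := by
    refine ⟨bx, hbx, by', hby, hbx0, hby0, ?_⟩
    rw [himg by', hlam]
  have hsc21 : SameClass J2 J1 := by
    refine ⟨by', hby, bx, hbx, hby0, hbx0, ?_⟩
    rw [himg by', hlam]
  have hnorm_eq : J1.norm = J2.norm :=
    le_antisymm (hJ1red.2 J2 hJ2nz hsc12) (hJ2red.2 J1 hJ1nz hsc21)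
  -- r1 ≠ 0
  set G : AddSubgroup ℂ := GSub Δ p q with hG
  have hGle : G ≤ OG Δ := GSub_le_OG hp hq
  have hqG : msub q (OG Δ) ≤ G := msub_OG_le_GSub p q
  have hr1ne : G.relIndex (OG Δ) ≠ 0 := by
    intro h0
    have := AddSubgroup.relIndex_mul_relIndex _ _ _ hqG hGle
    rw [h0, mul_zero] at this
    have hq2 := idx_eq hΔneg hΔmod hq hq0
    rw [← this] at hq2
    have := Complex.normSq_pos.mpr hq0
    rw [← hq2] at this
    simp at this
  -- main computation
  have hcx : (msub bx G).relIndex (OG Δ) = G.relIndex (OG Δ) * (msub bx (OG Δ)).relIndex (OG Δ) := by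
    have h1' : msub bx G ≤ msub bx (OG Δ) := msub_mono _ hGle
    have h2' : msub bx (OG Δ) ≤ OG Δ := msub_le_OG hbx le_rfl
    rw [← AddSubgroup.relIndex_mul_relIndex _ _ _ h1' h2', relindex_msub bx hbx0]
  have hlG : msub lam G ≤ OG Δ := by
    rw [hG, msub_GSub]; exact GSub_le_OG hlp hlq
  have hcy : (msub bx G).relIndex (OG Δ) =
      (msub lam G).relIndex (OG Δ) * (msub by' (OG Δ)).relIndex (OG Δ) := by
    have hbxeq : msub bx G = msub by' (msub lam G) := by rw [msub_msub, hlam]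
    have h1' : msub by' (msub lam G) ≤ msub by' (OG Δ) := msub_mono _ hlG
    have h2' : msub by' (OG Δ) ≤ OG Δ := msub_le_OG hby le_rfl
    rw [hbxeq, ← AddSubgroup.relIndex_mul_relIndex _ _ _ h1' h2', relindex_msub by' hby0]
  have hreq : (msub lam G).relIndex (OG Δ) = G.relIndex (OG Δ) := by
    rw [← hn2, ← hn1, hnorm_eq]
  rw [hcy, hreq] at hcx
  have hidx : (msub bx (OG Δ)).relIndex (OG Δ) = (msub by' (OG Δ)).relIndex (OG Δ) :=
    (Nat.eq_of_mul_eq_mul_left (Nat.pos_of_ne_zero hr1ne) hcx).symm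
  have h1r := idx_eq hΔneg hΔmod hbx hbx0
  have h2r := idx_eq hΔneg hΔmod hby hby0
  rw [hidx, h2r] at h1r
  rw [Complex.norm_def, Complex.norm_def, h1r]

end Ideals
section RunLemmas

variable {Δ : ℤ} {B : Set ℂ} {ε : ℝ} {z : ℂ} {N : ℕ∞}

lemma cast_le_trans {m n : ℕ} (h : m ≤ n) (hn : (n : ℕ∞) ≤ N) : (m : ℕ∞) ≤ N :=
  le_trans (by exact_mod_cast h) hn

lemma abs_le_mu (hadm : Admissible Δ B ε) {b : ℂ} (hb : b ∈ B) : ‖b‖ ≤ mu B :=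
  le_csSup (Set.Finite.bddAbove (hadm.2.1.image _)) ⟨b, hb, rfl⟩

lemma mu_pos (hadm : Admissible Δ B ε) : 0 < mu B := by
  obtain ⟨b, hb⟩ := hadm.1
  have hb0 : b ≠ 0 := fun h => hadm.2.2.2.1 (h ▸ hb)
  exact lt_of_lt_of_le (by simpa using hb0) (abs_le_mu hadm hb)

lemma b_mem_O (hadm : Admissible Δ B ε) {b : ℂ} (hb : b ∈ B) : b ∈ O Δ := hadm.2.2.1 hb

lemma b_ne (R : Run Δ B ε z N) (hadm : Admissible Δ B ε) (n : ℕ) (hn : (n : ℕ∞) ≤ N) :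
    R.b n ≠ 0 := by
  cases n with
  | zero => rw [show ((0 : ℕ) : ℤ) = 0 by norm_num, R.b_zero]; exact one_ne_zero
  | succ m =>
    intro h
    exact hadm.2.2.2.1 (h ▸ R.hb (m + 1) (by omega) hn)

lemma zs_spec (R : Run Δ B ε z N) (hadm : Admissible Δ B ε) (hε0 : 0 < ε)
    (n : ℕ) (h1 : 1 ≤ n) (hn : (n : ℕ∞) ≤ N) :
    R.zs n ≠ 0 ∧ 1 ≤ ε * ‖R.zs n‖ := by
  have hzr := R.hz n h1 hn
  have hw := R.hne n h1 hn
  have hcl := R.hclose n h1 hn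
  have e1 : ((n : ℤ) - 1) = ((n - 1 : ℕ) : ℤ) := by push_cast [Nat.cast_sub h1]; ring
  have hb1 : R.b ((n : ℤ) - 1) ≠ 0 := by
    rw [e1]; exact b_ne R hadm (n - 1) (cast_le_trans (Nat.sub_le n 1) hn)
  have hbpos : 0 < ‖R.b ((n : ℤ) - 1)‖ := by simpa using hb1
  have hwpos : 0 < ‖R.b n * R.zs ((n : ℤ) - 1) - R.a n‖ := by simpa using hw
  constructor
  · rw [hzr]
    exact div_ne_zero hb1 hw
  · rw [hzr, norm_div]
    rw [mul_div_assoc'] at *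
    rw [le_div_iff₀ hwpos]
    calc (1 : ℝ) * ‖R.b n * R.zs ((n : ℤ) - 1) - R.a n‖
        = ‖R.b n * R.zs ((n : ℤ) - 1) - R.a n‖ := by ring
      _ ≤ ε * ‖R.b ((n : ℤ) - 1)‖ := hcl
      _ = ε * ‖R.b ((n : ℤ) - 1)‖ := rfl

/-- Z_n = ∏_{k=1}^n z_k -/
def Zp (R : Run Δ B ε z N) : ℕ → ℂ := fun n => ∏ k ∈ Finset.range n, R.zs ((k + 1 : ℕ))

lemma Zp_zero (R : Run Δ B ε z N) : Zp R 0 = 1 := Finset.prod_range_zero _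

lemma Zp_succ (R : Run Δ B ε z N) (m : ℕ) : Zp R (m + 1) = Zp R m * R.zs ((m + 1 : ℕ)) :=
  Finset.prod_range_succ _ _

lemma Zp_spec (R : Run Δ B ε z N) (hadm : Admissible Δ B ε) (hε0 : 0 < ε) (hε1 : ε < 1) :
    ∀ n : ℕ, (n : ℕ∞) ≤ N → Zp R n ≠ 0 ∧ 1 ≤ ‖Zp R n‖ := by
  intro n
  induction n with
  | zero => intro _; rw [Zp_zero]; simp
  | succ m ih =>
    intro hn
    obtain ⟨hne, hge⟩ := ih (cast_le_trans (Nat.le_succ m) hn)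
    obtain ⟨hzne, hzge⟩ := zs_spec R hadm hε0 (m + 1) (by omega) hn
    have hzs1 : 1 ≤ ‖R.zs ((m + 1 : ℕ))‖ := by nlinarith
    rw [Zp_succ, norm_mul]
    exact ⟨mul_ne_zero hne hzne, by nlinarith⟩

lemma run_ids (R : Run Δ B ε z N) (hadm : Admissible Δ B ε) :
    ∀ n : ℕ, (n : ℕ∞) ≤ N →
      (R.q n * R.zs n + R.q ((n : ℤ) - 1) = R.b n * Zp R n) ∧
      (R.p n * R.zs n + R.p ((n : ℤ) - 1) = z * (R.b n * Zp R n)) ∧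
      (R.p n * R.q ((n : ℤ) - 1) - R.q n * R.p ((n : ℤ) - 1) = (-1) ^ n * R.b n) := by
  intro n
  induction n with
  | zero =>
    intro _
    have e1 : ((0 : ℕ) : ℤ) - 1 = -1 := by norm_num
    rw [e1, Nat.cast_zero, Zp_zero, R.q_zero, R.q_neg_one, R.p_zero, R.p_neg_one, R.b_zero,
      R.zs_zero]
    norm_num
  | succ m ih =>
    intro hn
    have hm : (m : ℕ∞) ≤ N := cast_le_trans (Nat.le_succ m) hn
    obtain ⟨A, B2, C⟩ := ih hm
    have e1 : ((m + 1 : ℕ) : ℤ) - 1 = (m : ℤ) := by push_cast; ring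
    have e2 : ((m + 1 : ℕ) : ℤ) - 2 = (m : ℤ) - 1 := by push_cast; ring
    have hq := R.hq (m + 1) (by omega) hn
    have hp := R.hp (m + 1) (by omega) hn
    have hzr := R.hz (m + 1) (by omega) hn
    have hw := R.hne (m + 1) (by omega) hn
    rw [e1, e2] at hq hp
    rw [e1] at hzr hw
    have hbm : R.b ((m : ℕ) : ℤ) ≠ 0 := b_ne R hadm m hm
    rw [e1]
    push_cast at hq hp hzr hw
    refine ⟨?_, ?_, ?_⟩
    · rw [Zp_succ]
      push_cast
      rw [hq, hzr]
      field_simp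
      linear_combination (R.b ((m : ℤ) + 1)) * A
    · rw [Zp_succ]
      push_cast
      rw [hp, hzr]
      field_simp
      linear_combination (R.b ((m : ℤ) + 1)) * B2
    · push_cast
      rw [hp, hq]
      field_simp
      linear_combination (-(R.b ((m : ℤ) + 1))) * C

lemma qz_formula (R : Run Δ B ε z N) (hadm : Admissible Δ B ε) (n : ℕ) (hn : (n : ℕ∞) ≤ N) :
    (R.q n * z - R.p n) * Zp R n = (-1) ^ (n + 1) := by
  obtain ⟨A, B2, C⟩ := run_ids R hadm n hn
  have hb : R.b n ≠ 0 := b_ne R hadm n hn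
  apply mul_right_cancel₀ hb
  linear_combination R.p ((n : ℕ) : ℤ) * A - R.q ((n : ℕ) : ℤ) * B2 - C

end RunLemmas
section MoreRun

variable {Δ : ℤ} {B : Set ℂ} {ε : ℝ} {z : ℂ} {N : ℕ∞}

lemma abs_sub_le' (x y : ℂ) : ‖x - y‖ ≤ ‖x‖ + ‖y‖ := by
  simpa using norm_sub_le x y

lemma q_one (R : Run Δ B ε z N) (h1 : ((1 : ℕ) : ℕ∞) ≤ N) :
    R.q ((1 : ℕ) : ℤ) = R.b ((1 : ℕ) : ℤ) := by
  have hq := R.hq 1 le_rfl h1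
  have e1 : ((1 : ℕ) : ℤ) - 1 = 0 := by norm_num
  have e2 : ((1 : ℕ) : ℤ) - 2 = -1 := by norm_num
  rw [e1, e2, R.q_zero, R.q_neg_one, R.b_zero] at hq
  rw [hq]
  ring

lemma Zp_shift (R : Run Δ B ε z N) (n : ℕ) (hn : 1 ≤ n) :
    Zp R n = Zp R (n - 1) * R.zs ((n : ℕ) : ℤ) := by
  have hn1 : n - 1 + 1 = n := Nat.sub_add_cancel hn
  have h := Zp_succ R (n - 1)
  rw [hn1] at h
  exact h

lemma q_lt (R : Run Δ B ε z N) (hadm : Admissible Δ B ε) (hε0 : 0 < ε) (hε1 : ε < 1) :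
    ∀ n : ℕ, 1 ≤ n → (n : ℕ∞) ≤ N →
      ‖R.q n‖ < mu B / (1 - ε ^ 2) * ‖Zp R (n - 1)‖ := by
  have hμ : 0 < mu B := mu_pos hadm
  have h1e : 0 < 1 - ε ^ 2 := by nlinarith
  intro n hn
  induction n, hn using Nat.le_induction with
  | base =>
    intro h1N
    rw [q_one R h1N]
    have hb1 : ‖R.b ((1 : ℕ) : ℤ)‖ ≤ mu B := abs_le_mu hadm (R.hb 1 le_rfl h1N)
    have : Zp R (1 - 1) = 1 := Zp_zero R
    rw [this]
    have hlt : mu B < mu B / (1 - ε ^ 2) := by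
      rw [lt_div_iff₀ h1e]
      nlinarith [mul_pos hμ (mul_pos hε0 hε0)]
    simp only [norm_one, mul_one]
    exact lt_of_le_of_lt hb1 hlt
  | succ n hn ih =>
    intro hN
    have hnN : (n : ℕ∞) ≤ N := cast_le_trans (Nat.le_succ n) hN
    have ihn := ih hnN
    have A := (run_ids R hadm (n + 1) hN).1
    have e1 : ((n + 1 : ℕ) : ℤ) - 1 = (n : ℤ) := by push_cast; ring
    rw [e1] at A
    -- abbreviations
    set K := mu B / (1 - ε ^ 2) with hK
    have hKpos : 0 < K := div_pos hμ h1e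
    have hKmu : K * (1 - ε ^ 2) = mu B := by rw [hK]; exact div_mul_cancel₀ _ h1e.ne'
    obtain ⟨hzsne, hzsS⟩ := zs_spec R hadm hε0 (n + 1) (by omega) hN
    obtain ⟨hzsnne, hzsnS⟩ := zs_spec R hadm hε0 n hn hnN
    set S : ℝ := ‖R.zs ((n + 1 : ℕ) : ℤ)‖ with hS
    set Sn : ℝ := ‖R.zs ((n : ℕ) : ℤ)‖ with hSn
    set Zm : ℝ := ‖Zp R (n - 1)‖ with hZm
    set Zn : ℝ := ‖Zp R n‖ with hZn
    have hZshift : Zn = Zm * Sn := by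
      rw [hZn, hZm, hSn, Zp_shift R n hn, norm_mul]
    have hZnn : 0 ≤ Zn := norm_nonneg _
    have hZmn : 0 ≤ Zm := norm_nonneg _
    have hQ0 : ‖R.q ((n : ℕ) : ℤ)‖ < K * Zm := ihn
    have hq0nn : 0 ≤ ‖R.q ((n : ℕ) : ℤ)‖ := norm_nonneg _
    have hZm_le : Zm ≤ ε * Zn := by
      have h := mul_nonneg hZmn (sub_nonneg.mpr hzsnS)
      nlinarith
    -- triangle from A
    have hsub : R.q ((n + 1 : ℕ) : ℤ) * R.zs ((n + 1 : ℕ) : ℤ) =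
        R.b ((n + 1 : ℕ) : ℤ) * Zp R (n + 1) - R.q ((n : ℕ) : ℤ) := by
      linear_combination A
    have htri : ‖R.q ((n + 1 : ℕ) : ℤ)‖ * S ≤
        ‖R.b ((n + 1 : ℕ) : ℤ)‖ * (Zn * S) + ‖R.q ((n : ℕ) : ℤ)‖ := by
      have h1 : ‖R.q ((n + 1 : ℕ) : ℤ)‖ * S =
          ‖R.b ((n + 1 : ℕ) : ℤ) * Zp R (n + 1) - R.q ((n : ℕ) : ℤ)‖ := by
        rw [hS, ← norm_mul, hsub]
      have h2 := abs_sub_le' (R.b ((n + 1 : ℕ) : ℤ) * Zp R (n + 1)) (R.q ((n : ℕ) : ℤ))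
      rw [norm_mul] at h2
      have h3 : ‖Zp R (n + 1)‖ = Zn * S := by
        rw [Zp_succ, norm_mul, hZn, hS]
      rw [h3] at h2
      linarith [h1 ▸ h2]
    have hbμ : ‖R.b ((n + 1 : ℕ) : ℤ)‖ ≤ mu B :=
      abs_le_mu hadm (R.hb (n + 1) (by omega) hN)
    have hSpos : 0 < S := by nlinarith
    -- main estimate
    have hmain : ‖R.q ((n + 1 : ℕ) : ℤ)‖ * S < K * Zn * S := by
      have c1 : ‖R.q ((n : ℕ) : ℤ)‖ < K * (ε * Zn) := by
        have := mul_le_mul_of_nonneg_left hZm_le hKpos.le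
        linarith
      have c2 : K * (ε * Zn) ≤ K * (ε * Zn) * (ε * S) := by
        have hx : 0 ≤ K * (ε * Zn) := by positivity
        nlinarith [mul_le_mul_of_nonneg_left hzsS hx]
      have c3 : ‖R.b ((n + 1 : ℕ) : ℤ)‖ * (Zn * S) ≤ mu B * (Zn * S) := by
        have hx : 0 ≤ Zn * S := by positivity
        exact mul_le_mul_of_nonneg_right hbμ hx
      have c5 : mu B + K * ε ^ 2 = K := by nlinarith [hKmu]
      calc ‖R.q ((n + 1 : ℕ) : ℤ)‖ * S
          ≤ ‖R.b ((n + 1 : ℕ) : ℤ)‖ * (Zn * S) + ‖R.q ((n : ℕ) : ℤ)‖ :=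
            htri
        _ < mu B * (Zn * S) + K * (ε * Zn) * (ε * S) := by linarith
        _ = (mu B + K * ε ^ 2) * (Zn * S) := by ring
        _ = K * Zn * S := by rw [c5]; ring
    have := lt_of_mul_lt_mul_right hmain hSpos.le
    have e4 : (n + 1) - 1 = n := by omega
    rw [e4]
    exact this

lemma q_ne (R : Run Δ B ε z N) (hadm : Admissible Δ B ε)
    (hΔneg : Δ < 0) (hΔmod : Δ % 4 = 0 ∨ Δ % 4 = 1) (hε0 : 0 < ε) (hε1 : ε < 1) :
    ∀ n : ℕ, 1 ≤ n → (n : ℕ∞) ≤ N → R.q ((n : ℕ) : ℤ) ≠ 0 := by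
  intro n hn hN
  match n, hn with
  | 1, _ =>
    rw [q_one R hN]
    exact b_ne R hadm 1 hN
  | (m + 2), _ =>
    intro h0
    obtain ⟨A, -, C⟩ := run_ids R hadm (m + 2) hN
    have e1 : ((m + 2 : ℕ) : ℤ) - 1 = ((m + 1 : ℕ) : ℤ) := by push_cast; ring
    rw [e1] at A C
    rw [h0] at A C
    have hb : R.b ((m + 2 : ℕ) : ℤ) ≠ 0 := b_ne R hadm (m + 2) hN
    have key : R.p ((m + 2 : ℕ) : ℤ) * Zp R (m + 2) * R.b ((m + 2 : ℕ) : ℤ) =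
        (-1) ^ (m + 2) * R.b ((m + 2 : ℕ) : ℤ) := by
      linear_combination C - R.p ((m + 2 : ℕ) : ℤ) * A
    have key2 : R.p ((m + 2 : ℕ) : ℤ) * Zp R (m + 2) = (-1) ^ (m + 2) :=
      mul_right_cancel₀ hb key
    have hpne : R.p ((m + 2 : ℕ) : ℤ) ≠ 0 := by
      intro hp0
      rw [hp0, zero_mul] at key2
      exact (pow_ne_zero (m + 2) (by norm_num : (-1 : ℂ) ≠ 0)) key2.symm
    have habs : ‖R.p ((m + 2 : ℕ) : ℤ)‖ * ‖Zp R (m + 2)‖ = 1 := by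
      have := congrArg (‖·‖) key2
      rw [norm_mul, norm_pow] at this
      simpa using this
    have hpge : 1 ≤ ‖R.p ((m + 2 : ℕ) : ℤ)‖ :=
      one_le_abs hΔneg hΔmod (R.hpO (m + 2) (by omega) hN) hpne
    obtain ⟨-, hZge⟩ := Zp_spec R hadm hε0 hε1 (m + 1) (cast_le_trans (by omega) hN)
    obtain ⟨-, hSge⟩ := zs_spec R hadm hε0 (m + 2) (by omega) hN
    have hZeq : ‖Zp R (m + 2)‖ =
        ‖Zp R (m + 1)‖ * ‖R.zs ((m + 2 : ℕ) : ℤ)‖ := by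
      rw [Zp_succ, norm_mul]
    have hSgt : 1 < ‖R.zs ((m + 2 : ℕ) : ℤ)‖ := by nlinarith
    have hZ1nn : (0 : ℝ) ≤ ‖Zp R (m + 1)‖ := norm_nonneg _
    have hZZgt : 1 < ‖Zp R (m + 2)‖ := by
      rw [hZeq]
      nlinarith [mul_nonneg (sub_nonneg.mpr hZge) (le_of_lt (lt_trans one_pos hSgt))]
    have hZZnn : (0 : ℝ) ≤ ‖Zp R (m + 2)‖ := norm_nonneg _
    nlinarith [mul_le_mul_of_nonneg_right hpge hZZnn]

end MoreRun
section ANe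

variable {Δ : ℤ} {B : Set ℂ} {ε : ℝ} {z : ℂ} {N : ℕ∞}

lemma a_ne (R : Run Δ B ε z N) (hadm : Admissible Δ B ε)
    (hΔneg : Δ < 0) (hΔmod : Δ % 4 = 0 ∨ Δ % 4 = 1) (hε0 : 0 < ε) (hε1 : ε < 1)
    (n : ℕ) (h1 : 1 ≤ n) (hN : ((n + 1 : ℕ) : ℕ∞) ≤ N) :
    R.a ((n + 1 : ℕ) : ℤ) ≠ 0 := by
  intro ha0
  have hnN : (n : ℕ∞) ≤ N := cast_le_trans (Nat.le_succ n) hN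
  have e1 : ((n + 1 : ℕ) : ℤ) - 1 = ((n : ℕ) : ℤ) := by push_cast; ring
  have e2 : ((n + 1 : ℕ) : ℤ) - 2 = ((n : ℕ) : ℤ) - 1 := by push_cast; ring
  have hq := R.hq (n + 1) (by omega) hN
  have hp := R.hp (n + 1) (by omega) hN
  have hzr := R.hz (n + 1) (by omega) hN
  have hw := R.hne (n + 1) (by omega) hN
  rw [e1, e2] at hq hp
  rw [e1] at hzr hw
  rw [ha0] at hq hp hzr hw
  have hbn : R.b ((n : ℕ) : ℤ) ≠ 0 := b_ne R hadm n hnN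
  have hbn1 : R.b ((n + 1 : ℕ) : ℤ) ≠ 0 := b_ne R hadm (n + 1) hN
  set lam : ℂ := R.b ((n + 1 : ℕ) : ℤ) / R.b ((n : ℕ) : ℤ) with hlamdef
  have hq' : R.q ((n + 1 : ℕ) : ℤ) = lam * R.q (((n : ℕ) : ℤ) - 1) := by
    rw [hq, hlamdef]; field_simp; ring
  have hp' : R.p ((n + 1 : ℕ) : ℤ) = lam * R.p (((n : ℕ) : ℤ) - 1) := by
    rw [hp, hlamdef]; field_simp; ring
  -- first, |b_{n+1}| = |b_n| fails against |zs| ≥ 1/ε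
  have hq1ne : R.q ((n + 1 : ℕ) : ℤ) ≠ 0 :=
    q_ne R hadm hΔneg hΔmod hε0 hε1 (n + 1) (by omega) hN
  rcases Nat.lt_or_ge n 2 with hn2 | hn2
  · -- n = 1 : q_{n-1} = q_0 = 0, contradiction with q_2 ≠ 0
    have hn1 : n = 1 := by omega
    subst hn1
    have ez : ((1 : ℕ) : ℤ) - 1 = 0 := by norm_num
    rw [ez, R.q_zero, mul_zero] at hq'
    exact hq1ne hq'
  · -- n ≥ 2
    have e4 : ((n : ℕ) : ℤ) - 1 = ((n - 1 : ℕ) : ℤ) := by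
      push_cast [Nat.cast_sub (by omega : 1 ≤ n)]; ring
    rw [e4] at hq' hp'
    have hm1 : 1 ≤ n - 1 := by omega
    have hm1N : ((n - 1 : ℕ) : ℕ∞) ≤ N := cast_le_trans (by omega) hN
    have hpm : R.p ((n - 1 : ℕ) : ℤ) ∈ O Δ := R.hpO (n - 1) hm1 hm1N
    have hqm : R.q ((n - 1 : ℕ) : ℤ) ∈ O Δ := R.hqO (n - 1) hm1 hm1N
    have hqm0 : R.q ((n - 1 : ℕ) : ℤ) ≠ 0 := q_ne R hadm hΔneg hΔmod hε0 hε1 (n - 1) hm1 hm1N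
    have hbxO : R.b ((n + 1 : ℕ) : ℤ) ∈ O Δ := b_mem_O hadm (R.hb (n + 1) (by omega) hN)
    have hbyO : R.b ((n : ℕ) : ℤ) ∈ O Δ := b_mem_O hadm (R.hb n h1 hnN)
    have hlam : R.b ((n : ℕ) : ℤ) * lam = R.b ((n + 1 : ℕ) : ℤ) := by
      rw [hlamdef]; field_simp
    have hlp : lam * R.p ((n - 1 : ℕ) : ℤ) ∈ O Δ := by
      rw [← hp']; exact R.hpO (n + 1) (by omega) hN
    have hlq : lam * R.q ((n - 1 : ℕ) : ℤ) ∈ O Δ := by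
      rw [← hq']; exact R.hqO (n + 1) (by omega) hN
    have h1red := R.hred (n - 1) hm1 hm1N
    have h2red := R.hred (n + 1) (by omega) hN
    rw [hp', hq'] at h2red
    have habs := abs_eq_of_reduced hΔneg hΔmod hpm hqm hqm0 hbxO hbn1 hbyO hbn hlam
      hlp hlq h1red h2red
    -- now the contradiction with the zs bounds
    have hww : R.b ((n + 1 : ℕ) : ℤ) * R.zs ((n : ℕ) : ℤ) ≠ 0 := by
      intro h; apply hw; rw [h]; ring
    have hkey : R.zs ((n + 1 : ℕ) : ℤ) * (R.b ((n + 1 : ℕ) : ℤ) * R.zs ((n : ℕ) : ℤ)) =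
        R.b ((n : ℕ) : ℤ) := by
      rw [hzr, sub_zero]
      exact div_mul_cancel₀ _ hww
    have habs2 := congrArg (‖·‖) hkey
    rw [norm_mul, norm_mul] at habs2
    obtain ⟨-, hS1⟩ := zs_spec R hadm hε0 n h1 hnN
    obtain ⟨-, hS2⟩ := zs_spec R hadm hε0 (n + 1) (by omega) hN
    have hbpos : 0 < ‖R.b ((n + 1 : ℕ) : ℤ)‖ := by simpa using hbn1
    rw [habs] at habs2
    -- habs2 : S2 * (|b_n| * S1) = |b_n| with |b_n| = |b_{n+1}|... careful
    have hS1pos : 0 < ‖R.zs ((n : ℕ) : ℤ)‖ := by nlinarith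
    have hS2pos : 0 < ‖R.zs ((n + 1 : ℕ) : ℤ)‖ := by nlinarith
    have hbnpos : 0 < ‖R.b ((n : ℕ) : ℤ)‖ := by simpa using hbn
    have hprod : ‖R.zs ((n + 1 : ℕ) : ℤ)‖ * ‖R.zs ((n : ℕ) : ℤ)‖ = 1 := by
      have := habs2
      field_simp at this ⊢
      nlinarith [this]
    nlinarith [mul_le_mul hS2 hS1 (by positivity) (by positivity : (0:ℝ) ≤ ε * ‖R.zs ((n + 1 : ℕ) : ℤ)‖)]

end ANe
theorem stmt5 (Δ : ℤ) (hΔneg : Δ < 0) (hΔmod : Δ % 4 = 0 ∨ Δ % 4 = 1)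
    (B : Set ℂ) (ε : ℝ) (hε0 : 0 < ε) (hε1 : ε < 1) (hadm : Admissible Δ B ε)
    (z : ℂ) (N : ℕ∞) (R : Run Δ B ε z N)
    (n : ℕ) (hn : 1 ≤ n) (hnN : (n : ℕ∞) ≤ N) :
    ‖R.q n * (R.q n * z - R.p n)‖ <
      mu B / ((1 - ε ^ 2) * ‖R.zs n‖) ∧
    (((n + 1 : ℕ) : ℕ∞) ≤ N →
      ‖R.q n * (R.q n * z - R.p n)‖ <
        (1 + ε ^ 2) * mu B ^ 2 / ((1 - ε ^ 2) * ‖R.a ((n : ℤ) + 1)‖) ∧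
      ‖R.q n * (R.q n * z - R.p n)‖ <
        mu B * ‖R.q n‖ / ((1 - ε ^ 2) * ‖R.q ((n : ℤ) + 1)‖)) := by
  have hμ : 0 < mu B := mu_pos hadm
  have h1e : 0 < 1 - ε ^ 2 := by nlinarith
  set L : ℝ := ‖R.q n * (R.q n * z - R.p n)‖ with hL
  obtain ⟨hzsne, hzsS⟩ := zs_spec R hadm hε0 n hn hnN
  set S : ℝ := ‖R.zs ((n : ℕ) : ℤ)‖ with hS
  have hSpos : 0 < S := by nlinarith
  obtain ⟨hZnne, hZnge⟩ := Zp_spec R hadm hε0 hε1 n hnN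
  have hm1N : ((n - 1 : ℕ) : ℕ∞) ≤ N := cast_le_trans (Nat.sub_le n 1) hnN
  obtain ⟨hZmne, hZmge⟩ := Zp_spec R hadm hε0 hε1 (n - 1) hm1N
  set Zm : ℝ := ‖Zp R (n - 1)‖ with hZm
  set Zn : ℝ := ‖Zp R n‖ with hZn
  have hZmpos : 0 < Zm := lt_of_lt_of_le one_pos hZmge
  have hZshift : Zn = Zm * S := by
    rw [hZn, hZm, hS, Zp_shift R n hn, norm_mul]
  -- the key identity |L| * Zn = |q_n|
  have hform := qz_formula R hadm n hnN
  have hq2 : (R.q ((n : ℕ) : ℤ) * (R.q ((n : ℕ) : ℤ) * z - R.p ((n : ℕ) : ℤ))) * Zp R n =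
      R.q ((n : ℕ) : ℤ) * (-1) ^ (n + 1) := by
    linear_combination R.q ((n : ℕ) : ℤ) * hform
  have heq : L * Zn = ‖R.q ((n : ℕ) : ℤ)‖ := by
    rw [hL, hZn, ← norm_mul, hq2, norm_mul, norm_pow]
    simp
  have hq_lt := q_lt R hadm hε0 hε1 n hn hnN
  have hqlt' : ‖R.q ((n : ℕ) : ℤ)‖ * (1 - ε ^ 2) < mu B * Zm := by
    have := mul_lt_mul_of_pos_right hq_lt h1e
    have heq2 : mu B / (1 - ε ^ 2) * Zm * (1 - ε ^ 2) = mu B * Zm := by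
      field_simp
    rw [heq2] at this
    exact this
  have hLnn : 0 ≤ L := norm_nonneg _
  -- part (i)
  have parti : L < mu B / ((1 - ε ^ 2) * S) := by
    rw [lt_div_iff₀ (by positivity)]
    have key : (L * ((1 - ε ^ 2) * S)) * Zm < mu B * Zm := by
      calc (L * ((1 - ε ^ 2) * S)) * Zm = (L * Zn) * (1 - ε ^ 2) := by
            rw [hZshift]; ring
        _ = ‖R.q ((n : ℕ) : ℤ)‖ * (1 - ε ^ 2) := by rw [heq]
        _ < mu B * Zm := hqlt'
    exact lt_of_mul_lt_mul_right key hZmpos.le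
  refine ⟨parti, ?_⟩
  intro hN1
  have e3 : ((n : ℕ) : ℤ) + 1 = ((n + 1 : ℕ) : ℤ) := by push_cast; ring
  -- part (ii)
  have hane := a_ne R hadm hΔneg hΔmod hε0 hε1 n hn hN1
  have hapos : 0 < ‖R.a ((n + 1 : ℕ) : ℤ)‖ := by simpa using hane
  have hcl := R.hclose (n + 1) (by omega) hN1
  have e1 : ((n + 1 : ℕ) : ℤ) - 1 = ((n : ℕ) : ℤ) := by push_cast; ring
  rw [e1] at hcl
  have hb1μ : ‖R.b ((n + 1 : ℕ) : ℤ)‖ ≤ mu B :=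
    abs_le_mu hadm (R.hb (n + 1) (by omega) hN1)
  have hbnμ : ‖R.b ((n : ℕ) : ℤ)‖ ≤ mu B :=
    abs_le_mu hadm (R.hb n hn hnN)
  have habound : ‖R.a ((n + 1 : ℕ) : ℤ)‖ ≤ (1 + ε ^ 2) * mu B * S := by
    have hdecomp : R.a ((n + 1 : ℕ) : ℤ) =
        R.b ((n + 1 : ℕ) : ℤ) * R.zs ((n : ℕ) : ℤ) -
          (R.b ((n + 1 : ℕ) : ℤ) * R.zs ((n : ℕ) : ℤ) - R.a ((n + 1 : ℕ) : ℤ)) := by ring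
    have htri : ‖R.a ((n + 1 : ℕ) : ℤ)‖ ≤
        ‖R.b ((n + 1 : ℕ) : ℤ) * R.zs ((n : ℕ) : ℤ)‖ +
          ‖R.b ((n + 1 : ℕ) : ℤ) * R.zs ((n : ℕ) : ℤ) - R.a ((n + 1 : ℕ) : ℤ)‖ := by
      conv_lhs => rw [hdecomp]
      exact abs_sub_le' _ _
    rw [norm_mul] at htri
    have hb1nn : 0 ≤ ‖R.b ((n + 1 : ℕ) : ℤ)‖ := norm_nonneg _
    have hbnnn : 0 ≤ ‖R.b ((n : ℕ) : ℤ)‖ := norm_nonneg _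
    nlinarith [htri, hcl, mul_le_mul_of_nonneg_right hb1μ hSpos.le,
      mul_le_mul_of_nonneg_left hbnμ hε0.le,
      mul_nonneg (mul_nonneg hε0.le hμ.le) (sub_nonneg.mpr hzsS)]
  constructor
  · rw [show ((n : ℤ) + 1) = ((n + 1 : ℕ) : ℤ) from e3]
    refine lt_of_lt_of_le parti ?_
    rw [div_le_div_iff₀ (by positivity) (by positivity)]
    have : mu B * ((1 - ε ^ 2) * ‖R.a ((n + 1 : ℕ) : ℤ)‖) ≤
        mu B * ((1 - ε ^ 2) * ((1 + ε ^ 2) * mu B * S)) := by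
      have h1 : 0 ≤ mu B * (1 - ε ^ 2) := by positivity
      nlinarith [mul_le_mul_of_nonneg_left habound h1]
    nlinarith [this]
  · rw [show ((n : ℤ) + 1) = ((n + 1 : ℕ) : ℤ) from e3]
    have hq1ne : R.q ((n + 1 : ℕ) : ℤ) ≠ 0 :=
      q_ne R hadm hΔneg hΔmod hε0 hε1 (n + 1) (by omega) hN1
    have hq1pos : 0 < ‖R.q ((n + 1 : ℕ) : ℤ)‖ := by simpa using hq1ne
    have hqnne : R.q ((n : ℕ) : ℤ) ≠ 0 := q_ne R hadm hΔneg hΔmod hε0 hε1 n hn hnN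
    have hLpos : 0 < L := by
      rw [hL]
      have hne2 : R.q ((n : ℕ) : ℤ) * z - R.p ((n : ℕ) : ℤ) ≠ 0 := by
        intro h0
        rw [h0, zero_mul] at hform
        exact (pow_ne_zero (n + 1) (by norm_num : (-1 : ℂ) ≠ 0)) hform.symm
      rw [norm_mul]
      exact mul_pos (norm_pos_iff.mpr hqnne) (norm_pos_iff.mpr hne2)
    have hq1lt := q_lt R hadm hε0 hε1 (n + 1) (by omega) hN1
    have e5 : (n + 1) - 1 = n := by omega
    rw [e5] at hq1lt
    have hq1lt' : ‖R.q ((n + 1 : ℕ) : ℤ)‖ * (1 - ε ^ 2) < mu B * Zn := by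
      have := mul_lt_mul_of_pos_right hq1lt h1e
      have heq2 : mu B / (1 - ε ^ 2) * Zn * (1 - ε ^ 2) = mu B * Zn := by
        field_simp
      rw [heq2] at this
      exact this
    rw [lt_div_iff₀ (by positivity)]
    calc L * ((1 - ε ^ 2) * ‖R.q ((n + 1 : ℕ) : ℤ)‖)
        = L * (‖R.q ((n + 1 : ℕ) : ℤ)‖ * (1 - ε ^ 2)) := by ring
      _ < L * (mu B * Zn) := by
          exact mul_lt_mul_of_pos_left hq1lt' hLpos
      _ = mu B * (L * Zn) := by ring
      _ = mu B * ‖R.q ((n : ℕ) : ℤ)‖ := by rw [heq]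

end CFNE
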